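/- There is no positive integer n and integers a, l, m, k with 1 ≤ a ≤ 9 and l, m, k ≥ 1 such that C_α·α^n = (a/9)·10^(l+m+k), where α is the real root of x^3 − x − 1 and C_α = (α+1)/(−α^2+3α+1). -/

import Mathlib

private def coef : ℕ → ℕ × ℕ × ℕ
  | 0 => (0, 0, 1)
  | n+1 => ((coef n).2.1, (coef n).1 + (coef n).2.2, (coef n).1)

private lemma coef_spec (α : ℝ) (hα : α ^ 3 = α + 1) (n : ℕ) :
    α ^ n = ((coef n).1 : ℝ) * α ^ 2 + ((coef n).2.1 : ℝ) * α + ((coef n).2.2 : ℝ) := by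
  induction n with
  | zero => simp [coef]
  | succ n ih =>
      have h : α ^ (n+1) = α ^ n * α := by ring
      rw [h, ih]
      show _ = ((coef (n+1)).1 : ℝ) * α ^ 2 + ((coef (n+1)).2.1 : ℝ) * α + ((coef (n+1)).2.2 : ℝ)
      simp only [coef]
      push_cast
      linear_combination ((coef n).1 : ℝ) * hα

private lemma no_int_root (n : ℤ) : n ^ 3 ≠ n + 1 := by
  intro h
  rcases Int.even_or_odd n with ⟨r, hr⟩ | ⟨r, hr⟩
  · rw [hr] at h
    have h8 : 8 * r ^ 3 = 2 * r + 1 := by linear_combination h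
    set m := r ^ 3
    omega
  · rw [hr] at h
    have h8 : 8 * r ^ 3 + 12 * r ^ 2 + 6 * r + 1 = 2 * r + 2 := by linear_combination h
    set m := r ^ 3
    set p := r ^ 2
    omega

private lemma no_rat_root (q : ℚ) : q ^ 3 ≠ q + 1 := by
  intro h
  have hd0 : (0:ℤ) < (q.den : ℤ) := by exact_mod_cast q.pos
  have hdq : ((q.den : ℤ) : ℚ) ≠ 0 := by exact_mod_cast hd0.ne'
  have hq : q = (q.num : ℚ) / ((q.den : ℤ) : ℚ) := by push_cast; exact (Rat.num_div_den q).symm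
  rw [hq] at h
  field_simp at h
  have h' : q.num ^ 3 * (q.den : ℤ) = (q.num + (q.den : ℤ)) * (q.den : ℤ) ^ 3 := by
    have h0 : q.num ^ 3 = (q.den : ℤ) ^ 2 * (q.num + (q.den : ℤ)) := by exact_mod_cast h
    linear_combination (q.den : ℤ) * h0
  have hfac : (q.num ^ 3 - (q.num * (q.den : ℤ) ^ 2 + (q.den : ℤ) ^ 3)) * (q.den : ℤ) = 0 := by
    linear_combination h'
  have key : q.num ^ 3 = q.num * (q.den : ℤ) ^ 2 + (q.den : ℤ) ^ 3 := by
    rcases mul_eq_zero.mp hfac with h0 | h0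
    · linarith
    · exact absurd h0 hd0.ne'
  have hdvd : (q.den : ℤ) ∣ q.num ^ 3 := ⟨q.num * q.den + (q.den : ℤ) ^ 2, by linear_combination key⟩
  have hdvd' : q.den ∣ q.num.natAbs ^ 3 := by
    have h2 := Int.natAbs_dvd_natAbs.mpr hdvd
    simpa [Int.natAbs_pow] using h2
  have hcop : Nat.Coprime q.den (q.num.natAbs ^ 3) := (q.reduced.symm).pow_right 3
  have hden1 : q.den = 1 := hcop.eq_one_of_dvd hdvd'
  have hd1 : (q.den : ℤ) = 1 := by rw [hden1]; norm_num
  rw [hd1] at key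
  have key2 : q.num ^ 3 = q.num + 1 := by linarith
  exact no_int_root q.num key2

theorem gamma_one_nonzero (α : ℝ) (hα : α ^ 3 = α + 1)
    (C : ℝ) (hC : C = (α + 1) / (-α ^ 2 + 3 * α + 1)) :
    ¬ ∃ n a l m k : ℕ, 1 ≤ n ∧ 1 ≤ a ∧ a ≤ 9 ∧ 1 ≤ l ∧ 1 ≤ m ∧ 1 ≤ k ∧
      C * α ^ n = ((a : ℝ) / 9) * 10 ^ (l + m + k) := by
  rintro ⟨n, a, l, m, k, hn, ha1, ha9, hl, hm, hk, heq⟩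
  have hw : -α ^ 2 + 3 * α + 1 ≠ 0 := by
    intro h0
    have h9 : 9 * α + 2 = 0 := by linear_combination hα + (α + 3) * h0
    have hval : α = -2/9 := by linarith
    rw [hval] at h0; norm_num at h0
  rw [hC, div_mul_eq_mul_div, div_eq_iff hw] at heq
  set L := l + m + k with hL
  have h9 : 9 * ((α + 1) * α ^ n) =
      ((a : ℝ) * 10 ^ L) * (-α ^ 2 + 3 * α + 1) := by
    linear_combination (9:ℝ) * heq
  have e0 := coef_spec α hα n
  have e1 := coef_spec α hα (n+1)
  set Q : ℤ := (a : ℤ) * 10 ^ L with hQ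
  have hQpos : 0 < Q := by
    have : (0:ℤ) < (a:ℤ) := by exact_mod_cast ha1
    positivity
  set c2 : ℤ := 9 * (((coef (n+1)).1 : ℤ) + ((coef n).1 : ℤ)) + Q with hc2
  set c1 : ℤ := 9 * (((coef (n+1)).2.1 : ℤ) + ((coef n).2.1 : ℤ)) - 3 * Q with hc1
  set c0 : ℤ := 9 * (((coef (n+1)).2.2 : ℤ) + ((coef n).2.2 : ℤ)) - Q with hc0
  have hquad : (c2:ℝ) * α ^ 2 + (c1:ℝ) * α + (c0:ℝ) = 0 := by
    rw [hc2, hc1, hc0, hQ]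
    push_cast
    linear_combination h9 - (9:ℝ) * e1 - (9:ℝ) * e0
  have hc2pos : 0 < c2 := by
    rw [hc2]
    have h1 : (0:ℤ) ≤ ((coef (n+1)).1 : ℤ) := Int.natCast_nonneg _
    have h2 : (0:ℤ) ≤ ((coef n).1 : ℤ) := Int.natCast_nonneg _
    linarith
  set u : ℤ := c1 ^ 2 - c0 * c2 - c2 ^ 2 with hu
  set v : ℤ := c2 ^ 2 - c0 * c1 with hv
  have huv : (u:ℝ) * α = (v:ℝ) := by
    rw [hu, hv]
    push_cast
    linear_combination ((c1:ℝ) - (c2:ℝ) * α) * hquad + ((c2:ℝ))^2 * hα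
  rcases eq_or_ne u 0 with hu0 | hu0
  · have hv0 : v = 0 := by
      have : (v:ℝ) = 0 := by rw [← huv, hu0]; simp
      exact_mod_cast this
    have h1 : c1 ^ 2 - c0 * c2 - c2 ^ 2 = 0 := by rw [← hu]; exact hu0
    have h2 : c2 ^ 2 - c0 * c1 = 0 := by rw [← hv]; exact hv0
    have hcube : c1 ^ 3 = c1 * c2 ^ 2 + c2 ^ 3 := by
      linear_combination c1 * h1 - c2 * h2
    have hc2q : ((c2:ℚ)) ≠ 0 := by exact_mod_cast hc2pos.ne'
    refine no_rat_root ((c1:ℚ) / (c2:ℚ)) ?_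
    field_simp
    have h' : c1 ^ 3 * c2 = (c1 + c2) * c2 ^ 3 := by linear_combination c2 * hcube
    have h'' : c1 ^ 3 = c2 ^ 2 * (c1 + c2) := by linear_combination hcube
    exact_mod_cast h''
  · have huR : ((u:ℝ)) ≠ 0 := by exact_mod_cast hu0
    have hαq : α = ((((v:ℚ) / (u:ℚ)) : ℚ) : ℝ) := by
      push_cast
      rw [eq_div_iff huR]
      linear_combination huv
    set q : ℚ := (v:ℚ) / (u:ℚ) with hq
    refine no_rat_root q ?_
    have h3 : ((q ^ 3 : ℚ) : ℝ) = ((q + 1 : ℚ) : ℝ) := by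
      push_cast
      rw [← hαq]
      exact hα
    exact_mod_cast h3
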